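/- Let m ≡ 2 (mod 4), n = 2m, u ∈ F_16 \ F_4 with u^5 = 1, w = u + u^(2^m) ∈ F_4 \ {0,1}, b ∈ GF(2^n)* and a = b^(2^m + 1). Set s so that s·Tr^n_m(b(u^4+1)) = w^2 Tr^n_m(b(u+1)) (assuming Tr^n_m(b(u^4+1)) ≠ 0). Then (w + s^2 + s)·(Tr^n_m(b(u^4+1)))^2 = a w. -/

import Mathlib

/-- Let `m ≡ 2 (mod 4)`, `n = 2m`, `u ∈ F₁₆ \ F₄` with `u⁵ = 1`, `w = u + u^(2^m)`,
`b ∈ GF(2^n)*` and `a = b^(2^m+1)`. If `s` satisfies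
`s·Tr^n_m(b(u⁴+1)) = w² Tr^n_m(b(u+1))` with `Tr^n_m(b(u⁴+1)) ≠ 0`, then
`(w + s² + s)·(Tr^n_m(b(u⁴+1)))² = a·w`. -/
theorem stmt_13 (m : ℕ) (hm : m % 4 = 2) (F : Type*) [Field F] [Fintype F]
    (hcard : Fintype.card F = 2 ^ (2 * m))
    (u : F) (hu16 : u ^ (2 ^ 4) = u) (hu4 : u ^ (2 ^ 2) ≠ u) (hu5 : u ^ 5 = 1)
    (w : F) (hw : w = u + u ^ (2 ^ m))
    (b : F) (hb : b ≠ 0) (a : F) (ha : a = b ^ (2 ^ m + 1))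
    (hT : b * (u ^ 4 + 1) + (b * (u ^ 4 + 1)) ^ (2 ^ m) ≠ 0)
    (s : F)
    (hs : s * (b * (u ^ 4 + 1) + (b * (u ^ 4 + 1)) ^ (2 ^ m)) =
      w ^ 2 * (b * (u + 1) + (b * (u + 1)) ^ (2 ^ m))) :
    (w + s ^ 2 + s) * (b * (u ^ 4 + 1) + (b * (u ^ 4 + 1)) ^ (2 ^ m)) ^ 2 = a * w := by
  -- characteristic 2
  have hchar2 : CharP F 2 := by
    obtain ⟨p, hp⟩ := CharP.exists F
    haveI := hp
    obtain ⟨n, hpn, hc⟩ := FiniteField.card F p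
    have hdvd : p ∣ 2 ^ (2 * m) := by
      rw [← hcard, hc]
      exact dvd_pow_self p n.ne_zero
    have hp2 : p = 2 :=
      (Nat.prime_dvd_prime_iff_eq hpn Nat.prime_two).mp (hpn.dvd_of_dvd_pow hdvd)
    exact hp2 ▸ hp
  haveI := hchar2
  have htwo : (2 : F) = 0 := by
    exact_mod_cast CharP.cast_eq_zero F 2
  -- u ≠ 0 and u^15 = 1
  have hu0 : u ≠ 0 := by
    rintro rfl
    exact hu4 (by norm_num)
  have hu16' : u ^ 16 = u := by norm_num at hu16; exact hu16
  have hu15 : u ^ 15 = 1 := by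
    have : u ^ 15 * u = 1 * u := by rw [one_mul, ← pow_succ]; exact hu16'
    exact mul_right_cancel₀ hu0 this
  -- u ^ (2^m) = u ^ 4
  have hu16k : ∀ j : ℕ, u ^ (16 ^ j) = u := by
    intro j
    induction j with
    | zero => simp
    | succ j ih => rw [pow_succ, pow_mul, ih, hu16']
  have hum : u ^ (2 ^ m) = u ^ 4 := by
    obtain ⟨j, hj⟩ : ∃ j, m = 4 * j + 2 := ⟨m / 4, by omega⟩
    have h2m : (2 : ℕ) ^ m = 16 ^ j * 4 := by
      rw [hj, pow_add, pow_mul]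
      norm_num
    rw [h2m, pow_mul, hu16k]
  -- Frobenius computations
  set B := b ^ (2 ^ m) with hBdef
  have hfrob1 : (b * (u ^ 4 + 1)) ^ (2 ^ m) = B * (u + 1) := by
    rw [mul_pow, add_pow_char_pow, one_pow, ← pow_mul, mul_comm 4 (2 ^ m), pow_mul, hum,
      ← pow_mul]
    norm_num [hu16']
    exact Or.inl hBdef.symm
  have hfrob2 : (b * (u + 1)) ^ (2 ^ m) = B * (u ^ 4 + 1) := by
    rw [mul_pow, add_pow_char_pow, one_pow, hum]
  have ha' : a = b * B := by
    rw [ha, pow_add, pow_one, mul_comm]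
  rw [hum] at hw
  subst hw
  rw [hfrob1] at hs hT ⊢
  rw [hfrob2] at hs
  rw [ha']
  linear_combination (B + B*s + b + b*s + u*B + u*B*s + u^2*B + u^2*b + u^3*b + u^4*b + u^4*b*s + (2:F)*u^5*B + (2:F)*u^5*b + u^6*B + (2:F)*u^6*b + u^8*B + u^8*b + (2:F)*u^9*B + u^9*b + u^12*B) * hs + ((18:F)*B^2 + (38:F)*b*B + (18:F)*b^2 + (17:F)*u*B^2 + (33:F)*u*b*B + (17:F)*u*b^2 + (15:F)*u^2*B^2 + (30:F)*u^2*b*B + (15:F)*u^2*b^2 + (14:F)*u^3*B^2 + (32:F)*u^3*b*B + (17:F)*u^3*b^2 + (16:F)*u^4*B^2 + (30:F)*u^4*b*B + (16:F)*u^4*b^2 + (14:F)*u^5*B^2 + (28:F)*u^5*b*B + (12:F)*u^5*b^2 + (13:F)*u^6*B^2 + (25:F)*u^6*b*B + (13:F)*u^6*b^2 + (10:F)*u^7*B^2 + (20:F)*u^7*b*B + (10:F)*u^7*b^2 + (11:F)*u^8*B^2 + (18:F)*u^8*b*B + (6:F)*u^8*b^2 + (13:F)*u^9*B^2 + (20:F)*u^9*b*B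 + (8:F)*u^9*b^2 + (6:F)*u^10*B^2 + (14:F)*u^10*b*B + (4:F)*u^10*b^2 + (5:F)*u^11*B^2 + (5:F)*u^11*b*B + u^11*b^2 + (8:F)*u^12*B^2 + (10:F)*u^12*b*B + (2:F)*u^12*b^2 + (6:F)*u^13*B^2 + (8:F)*u^13*b*B + u^13*b^2 + u^14*B^2 + (2:F)*u^15*B^2 + (2:F)*u^15*b*B + (4:F)*u^16*B^2 + (2:F)*u^16*b*B + u^19*B^2) * hu5 + ((9:F)*B^2 + (19:F)*b*B + (9:F)*b^2 + (9:F)*u*B^2 + (17:F)*u*b*B + (9:F)*u*b^2 + (9:F)*u^2*B^2 + (17:F)*u^2*b*B + (8:F)*u^2*b^2 + (8:F)*u^3*B^2 + (17:F)*u^3*b*B + (9:F)*u^3*b^2 + (9:F)*u^4*B^2 + (17:F)*u^4*b*B + (9:F)*u^4*b^2) * htwo
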